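/- For every m ≥ 2, the complete graph K_{2m} allows the characteristic polynomial a square: there exists a real symmetric 2m×2m matrix with all off-diagonal entries nonzero whose characteristic polynomial is the square of a real polynomial. -/
import Mathlib

open Polynomial Matrix

lemma my_charpoly_conj {n : Type*} [DecidableEq n] [Fintype n]
    (V D U : Matrix n n ℝ) (hVU : V * U = 1) :
    (V * D * U).charpoly = D.charpoly := by
  have hmap : ∀ (M N : Matrix n n ℝ),
      (M * N).map (C : ℝ →+* ℝ[X]) = M.map C * N.map C := fun M N =>
    Matrix.map_mul
  have h1 : (V.map (C : ℝ →+* ℝ[X])) * (U.map C) = 1 := by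
    rw [← hmap, hVU]; simp
  have hcomm : Matrix.scalar n (X : ℝ[X]) * (U.map C) =
      (U.map C) * Matrix.scalar n (X : ℝ[X]) :=
    (Matrix.scalar_commute X (fun r => Commute.all X r) (U.map C))
  have h2 : (V.map (C : ℝ →+* ℝ[X])) * Matrix.scalar n (X : ℝ[X]) * (U.map C)
      = Matrix.scalar n (X : ℝ[X]) := by
    rw [mul_assoc, hcomm, ← mul_assoc, h1, one_mul]
  have key : charmatrix (V * D * U) = (V.map C) * charmatrix D * (U.map C) := by
    rw [charmatrix, charmatrix, RingHom.mapMatrix_apply, RingHom.mapMatrix_apply,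
        mul_sub, sub_mul, h2, hmap, hmap, mul_assoc]
  rw [Matrix.charpoly, Matrix.charpoly, key, det_mul, det_mul]
  have h3 : (V.map (C : ℝ →+* ℝ[X])).det * (U.map C).det = 1 := by
    rw [← det_mul, h1, det_one]
  calc (V.map (C : ℝ →+* ℝ[X])).det * (charmatrix D).det * (U.map C).det
      = (charmatrix D).det * ((V.map (C : ℝ →+* ℝ[X])).det * (U.map C).det) := by ring
    _ = (charmatrix D).det := by rw [h3, mul_one]

lemma block_charpoly {k : Type*} [DecidableEq k] [Fintype k] (S S' : Matrix k k ℝ) :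
    (fromBlocks ((1/2:ℝ) • (S + S')) ((1/2:ℝ) • (S - S'))
      ((1/2:ℝ) • (S - S')) ((1/2:ℝ) • (S + S'))).charpoly
      = S.charpoly * S'.charpoly := by
  set U : Matrix (k ⊕ k) (k ⊕ k) ℝ := fromBlocks 1 1 1 (-1) with hU
  set V : Matrix (k ⊕ k) (k ⊕ k) ℝ := (1/2 : ℝ) • U with hV
  have hhalf : ((1:ℝ)/2) • ((1:Matrix k k ℝ) + 1) = 1 := by
    rw [smul_add, ← add_smul]; norm_num
  have hVU : V * U = 1 := by
    rw [hV, hU, smul_mul_assoc, fromBlocks_multiply]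
    simp only [Matrix.one_mul, Matrix.mul_one, Matrix.mul_neg, neg_neg, add_neg_cancel]
    rw [fromBlocks_smul, hhalf]
    simp [fromBlocks_one]
  have hA : V * (fromBlocks S 0 0 S') * U
      = fromBlocks ((1/2:ℝ) • (S + S')) ((1/2:ℝ) • (S - S'))
        ((1/2:ℝ) • (S - S')) ((1/2:ℝ) • (S + S')) := by
    rw [hV, hU, smul_mul_assoc, smul_mul_assoc, fromBlocks_multiply, fromBlocks_multiply,
        fromBlocks_smul]
    simp only [Matrix.one_mul, Matrix.mul_one, Matrix.zero_mul, Matrix.mul_zero,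
      Matrix.neg_mul, Matrix.mul_neg, add_zero, zero_add, neg_neg, ← sub_eq_add_neg, zero_sub, sub_neg_eq_add]
  rw [← hA, my_charpoly_conj _ _ _ hVU, Matrix.charpoly_fromBlocks_zero₁₂]

lemma pow4_key (m a b : ℕ) (hm : 3 ≤ m) (ha : a < m) (hb : b < m) :
    4 ^ a + 4 ^ b ≠ 4 ^ ((m - 1 + a) % m) + 4 ^ ((m - 1 + b) % m) := by
  have hmod0 : (m - 1 + 0) % m = m - 1 := by
    rw [Nat.add_zero, Nat.mod_eq_of_lt (by omega)]
  have hmod : ∀ c, c < m → c ≠ 0 → (m - 1 + c) % m = c - 1 := by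
    intro c hc hc0
    have h1 : m - 1 + c = (c - 1) + m := by omega
    rw [h1, Nat.add_mod_right, Nat.mod_eq_of_lt (by omega)]
  have h16 : (16 : ℕ) ≤ 4 ^ (m - 1) := by
    calc (16:ℕ) = 4 ^ 2 := by norm_num
    _ ≤ 4 ^ (m-1) := Nat.pow_le_pow_right (by norm_num) (by omega)
  have em : (4:ℕ) ^ (m - 1) = 4 ^ (m - 2) * 4 := by
    conv_lhs => rw [show m - 1 = (m-2)+1 by omega]
    rw [pow_succ]
  by_cases h0a : a = 0 <;> by_cases h0b : b = 0
  · subst h0a; subst h0b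
    rw [hmod0, pow_zero]
    generalize (4:ℕ) ^ (m - 1) = x at h16 ⊢
    omega
  · subst h0a
    rw [hmod0, hmod b hb h0b, pow_zero]
    by_cases hb1 : b = 1
    · subst hb1
      rw [pow_one, show (1:ℕ) - 1 = 0 from rfl, pow_zero]
      generalize (4:ℕ) ^ (m - 1) = x at h16 ⊢
      omega
    · have eb : (4:ℕ) ^ b = 4 ^ (b - 2) * 16 := by
        conv_lhs => rw [show b = (b-2)+2 by omega]
        rw [pow_add]; norm_num
      have eb1 : (4:ℕ) ^ (b - 1) = 4 ^ (b - 2) * 4 := by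
        conv_lhs => rw [show b - 1 = (b-2)+1 by omega]
        rw [pow_succ]
      rw [eb, eb1, em]
      generalize (4:ℕ) ^ (b - 2) = x
      generalize (4:ℕ) ^ (m - 2) = y
      omega
  · subst h0b
    rw [hmod0, hmod a ha h0a, pow_zero]
    by_cases ha1 : a = 1
    · subst ha1
      rw [pow_one, show (1:ℕ) - 1 = 0 from rfl, pow_zero]
      generalize (4:ℕ) ^ (m - 1) = x at h16 ⊢
      omega
    · have ea : (4:ℕ) ^ a = 4 ^ (a - 2) * 16 := by
        conv_lhs => rw [show a = (a-2)+2 by omega]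
        rw [pow_add]; norm_num
      have ea1 : (4:ℕ) ^ (a - 1) = 4 ^ (a - 2) * 4 := by
        conv_lhs => rw [show a - 1 = (a-2)+1 by omega]
        rw [pow_succ]
      rw [ea, ea1, em]
      generalize (4:ℕ) ^ (a - 2) = x
      generalize (4:ℕ) ^ (m - 2) = y
      omega
  · have ea : (4:ℕ) ^ a = 4 ^ (a - 1) * 4 := by
      conv_lhs => rw [show a = (a-1)+1 by omega]
      rw [pow_succ]
    have eb : (4:ℕ) ^ b = 4 ^ (b - 1) * 4 := by
      conv_lhs => rw [show b = (b-1)+1 by omega]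
      rw [pow_succ]
    rw [hmod a ha h0a, hmod b hb h0b, ea, eb]
    have hx : 1 ≤ (4:ℕ) ^ (a - 1) := Nat.one_le_pow _ _ (by norm_num)
    have hy : 1 ≤ (4:ℕ) ^ (b - 1) := Nat.one_le_pow _ _ (by norm_num)
    generalize (4:ℕ) ^ (a - 1) = x at hx ⊢
    generalize (4:ℕ) ^ (b - 1) = y at hy ⊢
    omega

lemma charpoly_fin_two' (M : Matrix (Fin 2) (Fin 2) ℝ) :
    M.charpoly = (X - C (M 0 0)) * (X - C (M 1 1)) - C (M 0 1) * C (M 1 0) := by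
  rw [Matrix.charpoly, Matrix.det_fin_two, charmatrix_apply_eq, charmatrix_apply_eq,
    charmatrix_apply_ne _ _ _ (by decide), charmatrix_apply_ne _ _ _ (by decide)]
  ring

lemma exists_SS' (m : ℕ) (hm : 2 ≤ m) :
    ∃ S S' : Matrix (Fin m) (Fin m) ℝ, S.IsSymm ∧ S'.IsSymm ∧
      S'.charpoly = S.charpoly ∧
      (∀ i j, S i j ≠ S' i j) ∧
      (∀ i j, i ≠ j → S i j + S' i j ≠ 0) := by
  rcases eq_or_lt_of_le hm with h2 | h3
  · -- m = 2
    subst h2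
    refine ⟨!![1,2;2,1], !![-1,0;0,3], ?_, ?_, ?_, ?_, ?_⟩
    · show _ = _
      ext i j
      fin_cases i <;> fin_cases j <;> rfl
    · show _ = _
      ext i j
      fin_cases i <;> fin_cases j <;> rfl
    · rw [charpoly_fin_two', charpoly_fin_two']
      norm_num [Matrix.cons_val_zero, Matrix.cons_val_one, Matrix.head_cons]
      simp only [map_neg, map_ofNat, Polynomial.C_1, Polynomial.C_0]
      ring
    · intro i j
      fin_cases i <;> fin_cases j <;> norm_num
    · intro i j hij
      fin_cases i <;> fin_cases j <;> first | (exact absurd rfl hij) | norm_num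
  · -- m ≥ 3
    obtain ⟨m', rfl⟩ : ∃ m', m = m' + 1 := ⟨m - 1, by omega⟩
    set n := m' + 1 with hn
    have h3' : 3 ≤ n := h3
    set S : Matrix (Fin n) (Fin n) ℝ := Matrix.of (fun i j => (4:ℝ)^(i:ℕ) + 4^(j:ℕ)) with hSdef
    set e : Fin n ≃ Fin n := Equiv.addRight 1 with he
    have hsymm : S.IsSymm := by
      show _ = _
      ext i j
      simp only [Matrix.transpose_apply, hSdef, Matrix.of_apply]
      ring
    have hesymm : ∀ i : Fin n, e.symm i = i - 1 := by
      intro i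
      simp [he, sub_eq_add_neg]
    have hval : ∀ i : Fin n, ((i - 1 : Fin n) : ℕ) = (n - 1 + (i:ℕ)) % n := by
      intro i
      have h1 : ((1 : Fin n) : ℕ) = 1 := by
        rw [Fin.val_one']
        exact Nat.mod_eq_of_lt (by omega)
      rw [Fin.sub_def]
      simp only [h1]
    refine ⟨S, Matrix.reindex e e S, hsymm, ?_, Matrix.charpoly_reindex e S, ?_, ?_⟩
    · rw [Matrix.reindex_apply]
      exact hsymm.submatrix _
    · intro i j
      rw [Matrix.reindex_apply, Matrix.submatrix_apply, hesymm, hesymm]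
      simp only [hSdef, Matrix.of_apply]
      intro h
      apply pow4_key n i j h3' i.isLt j.isLt
      have h' : ((4 ^ (i:ℕ) + 4 ^ (j:ℕ) : ℕ) : ℝ)
          = ((4 ^ ((n - 1 + (i:ℕ)) % n) + 4 ^ ((n - 1 + (j:ℕ)) % n) : ℕ) : ℝ) := by
        push_cast
        rw [← hval i, ← hval j]
        exact h
      exact_mod_cast h'
    · intro i j _
      rw [Matrix.reindex_apply, Matrix.submatrix_apply, hesymm, hesymm]
      simp only [hSdef, Matrix.of_apply]
      positivity

theorem stmt_16 (m : ℕ) (hm : 2 ≤ m) :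
    ∃ A : Matrix (Fin (2 * m)) (Fin (2 * m)) ℝ, A.IsSymm ∧
      (∀ i j : Fin (2 * m), i ≠ j → A i j ≠ 0) ∧
      ∃ g : Polynomial ℝ, A.charpoly = g ^ 2 := by
  obtain ⟨S, S', hS, hS', hchar, hC, hB⟩ := exists_SS' m hm
  set B : Matrix (Fin m) (Fin m) ℝ := (1/2 : ℝ) • (S + S') with hBdef
  set Cm : Matrix (Fin m) (Fin m) ℝ := (1/2 : ℝ) • (S - S') with hCdef
  set A0 : Matrix (Fin m ⊕ Fin m) (Fin m ⊕ Fin m) ℝ := fromBlocks B Cm Cm B with hA0def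
  set e : Fin m ⊕ Fin m ≃ Fin (2 * m) := finSumFinEquiv.trans (finCongr (two_mul m).symm)
    with hedef
  have hnz : ∀ x y : Fin m ⊕ Fin m, x ≠ y → A0 x y ≠ 0 := by
    intro x y hxy
    rcases x with a | a <;> rcases y with b | b
    · have hab : a ≠ b := fun h => hxy (by rw [h])
      simp only [hA0def, fromBlocks_apply₁₁, hBdef, Matrix.smul_apply, Matrix.add_apply,
        smul_eq_mul]
      exact mul_ne_zero (by norm_num) (hB a b hab)
    · simp only [hA0def, fromBlocks_apply₁₂, hCdef, Matrix.smul_apply, Matrix.sub_apply,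
        smul_eq_mul]
      exact mul_ne_zero (by norm_num) (sub_ne_zero.mpr (hC a b))
    · simp only [hA0def, fromBlocks_apply₂₁, hCdef, Matrix.smul_apply, Matrix.sub_apply,
        smul_eq_mul]
      exact mul_ne_zero (by norm_num) (sub_ne_zero.mpr (hC a b))
    · have hab : a ≠ b := fun h => hxy (by rw [h])
      simp only [hA0def, fromBlocks_apply₂₂, hBdef, Matrix.smul_apply, Matrix.add_apply,
        smul_eq_mul]
      exact mul_ne_zero (by norm_num) (hB a b hab)
  have hA0symm : A0.IsSymm := by
    show A0ᵀ = A0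
    rw [hA0def, fromBlocks_transpose]
    have hBs : Bᵀ = B := by
      rw [hBdef, Matrix.transpose_smul, Matrix.transpose_add, hS.eq, hS'.eq]
    have hCs : Cmᵀ = Cm := by
      rw [hCdef, Matrix.transpose_smul, Matrix.transpose_sub, hS.eq, hS'.eq]
    rw [hBs, hCs]
  refine ⟨Matrix.reindex e e A0, ?_, ?_, S.charpoly, ?_⟩
  · rw [Matrix.reindex_apply]
    exact hA0symm.submatrix _
  · intro i j hij
    rw [Matrix.reindex_apply, Matrix.submatrix_apply]
    exact hnz _ _ (fun h => hij (by simpa using congrArg e h))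
  · rw [Matrix.charpoly_reindex, hA0def, hBdef, hCdef, block_charpoly, hchar, sq]
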